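/- Let πₙ(σᵢ) = I₂^{⊗(i−1)} ⊗ R ⊗ I₂^{⊗(n−i−1)} and gᵢ = πₙ(σᵢ)². Then πₙ(σᵢ)⁻¹ g_{i±1} πₙ(σᵢ) = g_{i±1} gᵢ for all valid indices i. -/

import Mathlib

open Matrix Complex

/-- The 4×4 matrix `R = (1/√2)·[[1,0,0,1],[0,1,-1,0],[0,1,1,0],[-1,0,0,1]]`. -/
noncomputable def R4 : Matrix (Fin 4) (Fin 4) ℂ :=
  ((Real.sqrt 2 : ℝ) : ℂ)⁻¹ • !![1, 0, 0, 1; 0, 1, -1, 0; 0, 1, 1, 0; -1, 0, 0, 1]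

/-- `R` as a matrix on `ℂ² ⊗ ℂ²`, indexed by pairs; `p.1` is the first tensor
factor (the paper's basis ordering makes the second factor the major index). -/
noncomputable def R : Matrix (Fin 2 × Fin 2) (Fin 2 × Fin 2) ℂ := fun p q =>
  R4 ⟨p.1.val + 2 * p.2.val, by have := p.1.isLt; have := p.2.isLt; omega⟩
     ⟨q.1.val + 2 * q.2.val, by have := q.1.isLt; have := q.2.isLt; omega⟩

/-- The operator `I₂^{⊗ i} ⊗ M ⊗ I₂^{⊗ (n-i-2)}` acting on `(ℂ²)^{⊗ n}`
(0-indexed: `M` acts on tensor factors `i` and `i+1`). -/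
noncomputable def pairOp (n i : ℕ) (M : Matrix (Fin 2 × Fin 2) (Fin 2 × Fin 2) ℂ) :
    Matrix (Fin n → Fin 2) (Fin n → Fin 2) ℂ :=
  if h : i + 1 < n then fun x y =>
    M (x ⟨i, Nat.lt_of_succ_lt h⟩, x ⟨i + 1, h⟩) (y ⟨i, Nat.lt_of_succ_lt h⟩, y ⟨i + 1, h⟩) *
      ∏ j : Fin n, if (j : ℕ) = i ∨ (j : ℕ) = i + 1 then 1 else if x j = y j then 1 else 0
  else 0

/-- `gMat n i = I₂^{⊗ i} ⊗ R² ⊗ I₂^{⊗ (n-i-2)}` (0-indexed: `gMat n i` is the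
paper's `g_{i+1}`, acting on tensor factors `i` and `i+1`). -/
noncomputable def gMat (n i : ℕ) : Matrix (Fin n → Fin 2) (Fin n → Fin 2) ℂ :=
  pairOp n i (R * R)

/-- `piRep n i = I₂^{⊗ i} ⊗ R ⊗ I₂^{⊗ (n-i-2)}` (0-indexed: `piRep n i` is the
paper's `πₙ(σ_{i+1})`). -/
noncomputable def piRep (n i : ℕ) : Matrix (Fin n → Fin 2) (Fin n → Fin 2) ℂ :=
  pairOp n i R

open Kronecker

noncomputable def E3 (n k : ℕ) (h : k + 2 < n) :
    (Fin n → Fin 2) ≃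
      ((Fin 2 × Fin 2 × Fin 2) ×
        ({j : Fin n // (j:ℕ) ≠ k ∧ (j:ℕ) ≠ k+1 ∧ (j:ℕ) ≠ k+2} → Fin 2)) where
  toFun x := ((x ⟨k, by omega⟩, x ⟨k+1, by omega⟩, x ⟨k+2, h⟩), fun j => x j.1)
  invFun p := fun j =>
    if h0 : (j:ℕ) = k then p.1.1
    else if h1 : (j:ℕ) = k+1 then p.1.2.1
    else if h2 : (j:ℕ) = k+2 then p.1.2.2
    else p.2 ⟨j, ⟨h0, h1, h2⟩⟩
  left_inv x := by
    funext j
    by_cases h0 : (j:ℕ) = k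
    · simp only [dif_pos h0]; exact congrArg x (Fin.ext h0.symm)
    by_cases h1 : (j:ℕ) = k+1
    · simp only [dif_neg h0, dif_pos h1]; exact congrArg x (Fin.ext h1.symm)
    by_cases h2 : (j:ℕ) = k+2
    · simp only [dif_neg h0, dif_neg h1, dif_pos h2]; exact congrArg x (Fin.ext h2.symm)
    · simp only [dif_neg h0, dif_neg h1, dif_neg h2]
  right_inv p := by
    obtain ⟨⟨a, b, c⟩, w⟩ := p
    refine Prod.ext ?_ ?_
    · show (_, _, _) = (a, b, c)
      refine Prod.ext ?_ (Prod.ext ?_ ?_) <;> simp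
    · funext j
      obtain ⟨j, hj⟩ := j
      show (if _ : (j:ℕ) = k then a else _) = w _
      rw [dif_neg hj.1, dif_neg hj.2.1, dif_neg hj.2.2]

noncomputable def ext1 (M : Matrix (Fin 2 × Fin 2) (Fin 2 × Fin 2) ℂ) :
    Matrix (Fin 2 × Fin 2 × Fin 2) (Fin 2 × Fin 2 × Fin 2) ℂ :=
  (M ⊗ₖ (1 : Matrix (Fin 2) (Fin 2) ℂ)).submatrix
    (Equiv.prodAssoc (Fin 2) (Fin 2) (Fin 2)).symm (Equiv.prodAssoc (Fin 2) (Fin 2) (Fin 2)).symm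

noncomputable def ext2 (M : Matrix (Fin 2 × Fin 2) (Fin 2 × Fin 2) ℂ) :
    Matrix (Fin 2 × Fin 2 × Fin 2) (Fin 2 × Fin 2 × Fin 2) ℂ :=
  (1 : Matrix (Fin 2) (Fin 2) ℂ) ⊗ₖ M

lemma indicator_eq (P : Prop) [Decidable P] (u v : Fin 2) :
    (if P then (1:ℂ) else if u = v then 1 else 0) = if P ∨ u = v then 1 else 0 := by
  by_cases hP : P <;> simp [hP]

lemma P1 (n k : ℕ) (h : k + 2 < n) (M : Matrix (Fin 2 × Fin 2) (Fin 2 × Fin 2) ℂ) :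
    pairOp n k M = ((ext1 M) ⊗ₖ (1 : Matrix _ _ ℂ)).submatrix (E3 n k h) (E3 n k h) := by
  ext x y
  rw [show pairOp n k M = _ from dif_pos (by omega : k + 1 < n)]
  simp only [submatrix_apply, kroneckerMap_apply, ext1, E3, Equiv.coe_fn_mk,
    Equiv.prodAssoc_symm_apply, Matrix.one_apply]
  rw [Finset.prod_congr rfl (fun (j : Fin n) _ => indicator_eq ((j:ℕ) = k ∨ (j:ℕ) = k+1) (x j) (y j)),
    Finset.prod_boole]
  rw [mul_assoc]
  congr 1
  simp only [Finset.mem_univ, forall_true_left]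
  by_cases hc : x ⟨k+2, h⟩ = y ⟨k+2, h⟩
  · by_cases hw : (fun j : {j : Fin n // (j:ℕ) ≠ k ∧ (j:ℕ) ≠ k+1 ∧ (j:ℕ) ≠ k+2} => x j.1)
        = fun j => y j.1
    · rw [if_pos hc, if_pos hw, if_pos, one_mul]
      intro j
      by_cases h0 : (j:ℕ) = k; · tauto
      by_cases h1 : (j:ℕ) = k+1; · tauto
      by_cases h2 : (j:ℕ) = k+2
      · right; have : j = ⟨k+2, h⟩ := Fin.ext h2; rw [this]; exact hc
      · right; exact congrFun hw ⟨j, ⟨h0, h1, h2⟩⟩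
    · rw [if_pos hc, if_neg hw, one_mul, if_neg]
      intro hall
      refine hw (funext fun j => ?_)
      rcases j with ⟨j, hj⟩
      have := hall j
      simp only at this ⊢
      rcases this with (h' | h') | h'
      · exact absurd h' hj.1
      · exact absurd h' hj.2.1
      · exact h'
  · rw [if_neg hc, zero_mul, if_neg]
    intro hall
    have := hall ⟨k+2, h⟩
    simp only at this
    rcases this with (h' | h') | h'
    · omega
    · omega
    · exact hc h'

lemma P2 (n k : ℕ) (h : k + 2 < n) (M : Matrix (Fin 2 × Fin 2) (Fin 2 × Fin 2) ℂ) :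
    pairOp n (k+1) M = ((ext2 M) ⊗ₖ (1 : Matrix _ _ ℂ)).submatrix (E3 n k h) (E3 n k h) := by
  ext x y
  rw [show pairOp n (k+1) M = _ from dif_pos (by omega : k + 1 + 1 < n)]
  simp only [submatrix_apply, kroneckerMap_apply, ext2, E3, Equiv.coe_fn_mk, Matrix.one_apply]
  rw [Finset.prod_congr rfl
    (fun (j : Fin n) _ => indicator_eq ((j:ℕ) = k+1 ∨ (j:ℕ) = k+1+1) (x j) (y j)),
    Finset.prod_boole]
  have hring : ∀ (p q r : ℂ), p * q * r = q * (p * r) := fun p q r => by ring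
  rw [hring]
  congr 1
  simp only [Finset.mem_univ, forall_true_left]
  by_cases hc : x ⟨k, by omega⟩ = y ⟨k, by omega⟩
  · by_cases hw : (fun j : {j : Fin n // (j:ℕ) ≠ k ∧ (j:ℕ) ≠ k+1 ∧ (j:ℕ) ≠ k+2} => x j.1)
        = fun j => y j.1
    · rw [if_pos hc, if_pos hw, if_pos, one_mul]
      intro j
      by_cases h1 : (j:ℕ) = k+1; · tauto
      by_cases h2 : (j:ℕ) = k+1+1; · tauto
      by_cases h0 : (j:ℕ) = k
      · right; have : j = ⟨k, by omega⟩ := Fin.ext h0; rw [this]; exact hc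
      · right; exact congrFun hw ⟨j, ⟨h0, h1, by omega⟩⟩
    · rw [if_pos hc, if_neg hw, one_mul, if_neg]
      intro hall
      refine hw (funext fun j => ?_)
      rcases j with ⟨j, hj⟩
      have := hall j
      simp only at this ⊢
      rcases this with (h' | h') | h'
      · exact absurd h' hj.2.1
      · exact absurd (by omega : (j:ℕ) = k + 2) hj.2.2
      · exact h'
  · rw [if_neg hc, zero_mul, if_neg]
    intro hall
    have := hall ⟨k, by omega⟩
    simp only at this
    rcases this with (h' | h') | h'
    · omega
    · omega
    · exact hc h'

lemma ext1_mul (M N : Matrix (Fin 2 × Fin 2) (Fin 2 × Fin 2) ℂ) :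
    ext1 M * ext1 N = ext1 (M * N) := by
  unfold ext1
  rw [Matrix.submatrix_mul_equiv, ← Matrix.mul_kronecker_mul, Matrix.one_mul]

lemma ext2_mul (M N : Matrix (Fin 2 × Fin 2) (Fin 2 × Fin 2) ℂ) :
    ext2 M * ext2 N = ext2 (M * N) := by
  unfold ext2
  rw [← Matrix.mul_kronecker_mul, Matrix.one_mul]

lemma ext1_one : ext1 1 = 1 := by
  unfold ext1
  rw [Matrix.one_kronecker_one, Matrix.submatrix_one_equiv]

lemma ext2_one : ext2 1 = 1 := by
  unfold ext2
  rw [Matrix.one_kronecker_one]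

lemma ext1_smul (c : ℂ) (M : Matrix (Fin 2 × Fin 2) (Fin 2 × Fin 2) ℂ) :
    ext1 (c • M) = c • ext1 M := by
  unfold ext1
  rw [Matrix.smul_kronecker, Matrix.submatrix_smul]; rfl

lemma ext2_smul (c : ℂ) (M : Matrix (Fin 2 × Fin 2) (Fin 2 × Fin 2) ℂ) :
    ext2 (c • M) = c • ext2 M := by
  unfold ext2
  rw [Matrix.kronecker_smul]

def S4z : Matrix (Fin 4) (Fin 4) ℤ := !![1, 0, 0, 1; 0, 1, -1, 0; 0, 1, 1, 0; -1, 0, 0, 1]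
def T4z : Matrix (Fin 4) (Fin 4) ℤ := !![1, 0, 0, -1; 0, 1, 1, 0; 0, -1, 1, 0; 1, 0, 0, 1]
def Smz : Matrix (Fin 2 × Fin 2) (Fin 2 × Fin 2) ℤ := fun p q =>
  S4z ⟨p.1.val + 2 * p.2.val, by omega⟩ ⟨q.1.val + 2 * q.2.val, by omega⟩
def Tmz : Matrix (Fin 2 × Fin 2) (Fin 2 × Fin 2) ℤ := fun p q =>
  T4z ⟨p.1.val + 2 * p.2.val, by omega⟩ ⟨q.1.val + 2 * q.2.val, by omega⟩

def ext1z (M : Matrix (Fin 2 × Fin 2) (Fin 2 × Fin 2) ℤ) :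
    Matrix (Fin 2 × Fin 2 × Fin 2) (Fin 2 × Fin 2 × Fin 2) ℤ :=
  (M ⊗ₖ (1 : Matrix (Fin 2) (Fin 2) ℤ)).submatrix
    (Equiv.prodAssoc (Fin 2) (Fin 2) (Fin 2)).symm (Equiv.prodAssoc (Fin 2) (Fin 2) (Fin 2)).symm
def ext2z (M : Matrix (Fin 2 × Fin 2) (Fin 2 × Fin 2) ℤ) :
    Matrix (Fin 2 × Fin 2 × Fin 2) (Fin 2 × Fin 2 × Fin 2) ℤ :=
  (1 : Matrix (Fin 2) (Fin 2) ℤ) ⊗ₖ M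

noncomputable def Sm : Matrix (Fin 2 × Fin 2) (Fin 2 × Fin 2) ℂ := Smz.map (Int.cast : ℤ → ℂ)
noncomputable def Tm : Matrix (Fin 2 × Fin 2) (Fin 2 × Fin 2) ℂ := Tmz.map (Int.cast : ℤ → ℂ)

lemma mapz_mul {ι : Type*} [Fintype ι] [DecidableEq ι] (A B : Matrix ι ι ℤ) :
    (A * B).map (Int.cast : ℤ → ℂ) = A.map (Int.cast : ℤ → ℂ) * B.map (Int.cast : ℤ → ℂ) := by
  ext p q
  simp [Matrix.map_apply, Matrix.mul_apply]

lemma mapz_smul_one {ι : Type*} [Fintype ι] [DecidableEq ι] :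
    (((2:ℤ) • 1 : Matrix ι ι ℤ)).map (Int.cast : ℤ → ℂ) = (2 : ℂ) • 1 := by
  ext p q
  simp only [Matrix.map_apply, Matrix.smul_apply, Matrix.one_apply, smul_eq_mul,
    apply_ite (Int.cast : ℤ → ℂ)]
  split <;> simp

lemma ext1_map (A : Matrix (Fin 2 × Fin 2) (Fin 2 × Fin 2) ℤ) :
    ext1 (A.map (Int.cast : ℤ → ℂ)) = (ext1z A).map (Int.cast : ℤ → ℂ) := by
  ext p q
  simp [ext1, ext1z, Matrix.one_apply, apply_ite (Int.cast : ℤ → ℂ)]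

lemma ext2_map (A : Matrix (Fin 2 × Fin 2) (Fin 2 × Fin 2) ℤ) :
    ext2 (A.map (Int.cast : ℤ → ℂ)) = (ext2z A).map (Int.cast : ℤ → ℂ) := by
  ext p q
  simp [ext2, ext2z, Matrix.one_apply, apply_ite (Int.cast : ℤ → ℂ)]

lemma hSmSm : Sm * Sm = (Smz * Smz).map (Int.cast : ℤ → ℂ) := (mapz_mul _ _).symm

lemma hST : Sm * Tm = (2 : ℂ) • 1 := by
  rw [Sm, Tm, ← mapz_mul, (by decide : Smz * Tmz = (2:ℤ) • 1), mapz_smul_one]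

lemma key1 : ext1 Tm * ext2 (Sm * Sm) * ext1 Sm = ext2 (Sm * Sm) * ext1 (Sm * Sm) := by
  rw [hSmSm, Sm, Tm, ext1_map, ext2_map, ext1_map, ext1_map, ← mapz_mul, ← mapz_mul, ← mapz_mul,
    (by decide : ext1z Tmz * ext2z (Smz * Smz) * ext1z Smz = ext2z (Smz * Smz) * ext1z (Smz * Smz))]

lemma key2 : ext2 Tm * ext1 (Sm * Sm) * ext2 Sm = ext1 (Sm * Sm) * ext2 (Sm * Sm) := by
  rw [hSmSm, Sm, Tm, ext2_map, ext1_map, ext2_map, ext2_map, ← mapz_mul, ← mapz_mul, ← mapz_mul,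
    (by decide : ext2z Tmz * ext1z (Smz * Smz) * ext2z Smz = ext1z (Smz * Smz) * ext2z (Smz * Smz))]

noncomputable def cC : ℂ := ((Real.sqrt 2 : ℝ) : ℂ)⁻¹

lemma hc : cC * cC = (2:ℂ)⁻¹ := by
  rw [cC, ← mul_inv, ← Complex.ofReal_mul, Real.mul_self_sqrt (by norm_num)]
  norm_num

lemma hR4 : R4 = cC • (S4z.map (Int.cast : ℤ → ℂ)) := by
  rw [R4, cC]
  congr 1
  ext i j
  fin_cases i <;> fin_cases j <;> simp [S4z]

lemma hR : R = cC • Sm := by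
  ext p q
  simp [R, hR4, Sm, Smz, Matrix.smul_apply, Matrix.map_apply]

lemma hRR : R * R = (2:ℂ)⁻¹ • (Sm * Sm) := by
  rw [hR, smul_mul_assoc, mul_smul_comm, smul_smul, hc]

lemma hRRb : R * (cC • Tm) = 1 := by
  rw [hR, smul_mul_assoc, mul_smul_comm, smul_smul, hc, hST, smul_smul]
  norm_num

lemma key1C : ext1 (cC • Tm) * ext2 (R * R) * ext1 R = ext2 (R * R) * ext1 (R * R) := by
  rw [hRR, hR]
  simp only [ext1_smul, ext2_smul, smul_mul_assoc, mul_smul_comm, smul_smul]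
  rw [key1]
  congr 1
  linear_combination (2:ℂ)⁻¹ * hc

lemma key2C : ext2 (cC • Tm) * ext1 (R * R) * ext2 R = ext1 (R * R) * ext2 (R * R) := by
  rw [hRR, hR]
  simp only [ext1_smul, ext2_smul, smul_mul_assoc, mul_smul_comm, smul_smul]
  rw [key2]
  congr 1
  linear_combination (2:ℂ)⁻¹ * hc

/-- `πₙ(σᵢ)⁻¹ g_{i±1} πₙ(σᵢ) = g_{i±1} gᵢ` for all valid adjacent
indices (0-indexed). -/
theorem stmt10 (n i j : ℕ) (hi : i + 2 ≤ n) (hj : j + 2 ≤ n)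
    (hadj : j = i + 1 ∨ i = j + 1) :
    (piRep n i)⁻¹ * gMat n j * piRep n i = gMat n j * gMat n i := by
  rcases hadj with rfl | rfl
  · have h : i + 2 < n := by omega
    have hpi : piRep n i = ((ext1 R) ⊗ₖ 1).submatrix (E3 n i h) (E3 n i h) := P1 n i h R
    have hinv : (piRep n i)⁻¹
        = ((ext1 (cC • Tm)) ⊗ₖ (1 : Matrix _ _ ℂ)).submatrix (E3 n i h) (E3 n i h) := by
      apply Matrix.inv_eq_right_inv
      rw [hpi, Matrix.submatrix_mul_equiv, ← Matrix.mul_kronecker_mul, Matrix.one_mul,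
        ext1_mul, hRRb, ext1_one, Matrix.one_kronecker_one, Matrix.submatrix_one_equiv]
    rw [hinv]
    show _ * pairOp n (i+1) (R*R) * piRep n i = pairOp n (i+1) (R*R) * pairOp n i (R*R)
    rw [P2 n i h (R*R), P1 n i h (R*R), hpi,
      Matrix.submatrix_mul_equiv, Matrix.submatrix_mul_equiv, Matrix.submatrix_mul_equiv,
      ← Matrix.mul_kronecker_mul, ← Matrix.mul_kronecker_mul, ← Matrix.mul_kronecker_mul,
      Matrix.one_mul, Matrix.one_mul, key1C]
  · have h : j + 2 < n := by omega
    have hpi : piRep n (j+1) = ((ext2 R) ⊗ₖ 1).submatrix (E3 n j h) (E3 n j h) := P2 n j h R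
    have hinv : (piRep n (j+1))⁻¹
        = ((ext2 (cC • Tm)) ⊗ₖ (1 : Matrix _ _ ℂ)).submatrix (E3 n j h) (E3 n j h) := by
      apply Matrix.inv_eq_right_inv
      rw [hpi, Matrix.submatrix_mul_equiv, ← Matrix.mul_kronecker_mul, Matrix.one_mul,
        ext2_mul, hRRb, ext2_one, Matrix.one_kronecker_one, Matrix.submatrix_one_equiv]
    rw [hinv]
    show _ * pairOp n j (R*R) * piRep n (j+1) = pairOp n j (R*R) * pairOp n (j+1) (R*R)
    rw [P1 n j h (R*R), P2 n j h (R*R), hpi,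
      Matrix.submatrix_mul_equiv, Matrix.submatrix_mul_equiv, Matrix.submatrix_mul_equiv,
      ← Matrix.mul_kronecker_mul, ← Matrix.mul_kronecker_mul, ← Matrix.mul_kronecker_mul,
      Matrix.one_mul, Matrix.one_mul, key2C]
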